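/- Let k ≥ 3 be odd and t = (k−1)/2. The graph obtained as the join of a clique on t vertices with an independent set of arbitrary size m contains no cycle C_k and no linear forest with k edges. -/

import Mathlib

open SimpleGraph

/-- `H` is contained in `G` as a subgraph: there is an injective map preserving adjacency. -/
def Contains {α β : Type*} (G : SimpleGraph α) (H : SimpleGraph β) : Prop :=
  ∃ f : β ↪ α, ∀ a b, H.Adj a b → G.Adj (f a) (f b)

/-- The join of two graphs: all cross edges are added. -/
def graphJoin {α β : Type*} (G : SimpleGraph α) (H : SimpleGraph β) : SimpleGraph (α ⊕ β) where
  Adj x y :=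
    match x, y with
    | Sum.inl a, Sum.inl b => G.Adj a b
    | Sum.inl _, Sum.inr _ => True
    | Sum.inr _, Sum.inl _ => True
    | Sum.inr a, Sum.inr b => H.Adj a b
  symm := by
    constructor
    rintro (a|a) (b|b) h
    · exact G.adj_symm h
    · trivial
    · trivial
    · exact H.adj_symm h
  loopless := by
    constructor
    rintro (a|a) h
    · exact G.ne_of_adj h rfl
    · exact H.ne_of_adj h rfl

/-- The join of a clique on `t` vertices with an independent set of `m` vertices. -/
def cliqueIndepJoin (t m : ℕ) : SimpleGraph (Fin t ⊕ Fin m) :=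
  graphJoin (completeGraph (Fin t)) (⊥ : SimpleGraph (Fin m))
/-- A linear forest: an acyclic graph in which every vertex has degree at most 2,
i.e. a vertex-disjoint union of paths. -/
def IsLinearForest {β : Type*} (F : SimpleGraph β) : Prop :=
  F.IsAcyclic ∧ ∀ v, (F.neighborSet v).ncard ≤ 2

/-- Each left fiber covers at most 2 edges. -/
lemma fiber_bound {β γ : Type*} [Fintype β] [DecidableEq β] [DecidableEq γ]
    (H : SimpleGraph β) [DecidableRel H.Adj] (f : β ↪ γ)
    (hdeg : ∀ a, H.degree a ≤ 2) (v : γ) :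
    (H.edgeFinset.filter (fun e => v ∈ Sym2.map f e)).card ≤ 2 := by
  by_cases h : ∃ a, f a = v
  · obtain ⟨a, ha⟩ := h
    have heq : H.edgeFinset.filter (fun e => v ∈ Sym2.map f e) = H.incidenceFinset a := by
      rw [incidenceFinset_eq_filter]
      apply Finset.filter_congr
      intro e _
      constructor
      · intro hv
        obtain ⟨b, hb, hfb⟩ := Sym2.mem_map.mp hv
        rwa [← f.injective (hfb.trans ha.symm)]
      · intro hb
        exact Sym2.mem_map.mpr ⟨a, hb, ha⟩
    rw [heq, card_incidenceFinset_eq_degree]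
    exact hdeg a
  · rw [Finset.filter_false_of_mem]
    · simp
    · intro e _ hv
      obtain ⟨b, _, hfb⟩ := Sym2.mem_map.mp hv
      exact h ⟨b, hfb⟩

/-- Counting lemma: any graph with max degree ≤ 2 embedded in the join has at most `2t` edges. -/
lemma main_bound {t m : ℕ} {β : Type*} [Fintype β] [DecidableEq β]
    (H : SimpleGraph β) [DecidableRel H.Adj] (f : β ↪ (Fin t ⊕ Fin m))
    (hf : ∀ a b, H.Adj a b → (cliqueIndepJoin t m).Adj (f a) (f b))
    (hdeg : ∀ a, H.degree a ≤ 2) :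
    H.edgeSet.ncard ≤ 2 * t := by
  classical
  rw [← coe_edgeFinset, Set.ncard_coe_finset]
  have hsub : H.edgeFinset ⊆ Finset.univ.biUnion
      (fun v : Fin t => H.edgeFinset.filter (fun e => Sum.inl v ∈ Sym2.map f e)) := by
    intro e he
    induction e using Sym2.ind with
    | _ a b =>
      have hadj : H.Adj a b := by rwa [mem_edgeFinset, mem_edgeSet] at he
      have hG := hf a b hadj
      simp only [Finset.mem_biUnion, Finset.mem_univ, true_and, Finset.mem_filter]
      rcases hfa : f a with v | w
      · exact ⟨v, he, by rw [Sym2.map_pair_eq, hfa]; simp⟩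
      · rcases hfb : f b with v | w'
        · exact ⟨v, he, by rw [Sym2.map_pair_eq, hfb]; simp⟩
        · exfalso
          rw [hfa, hfb] at hG
          exact hG
  calc H.edgeFinset.card
      ≤ (Finset.univ.biUnion
          (fun v : Fin t => H.edgeFinset.filter (fun e => Sum.inl v ∈ Sym2.map f e))).card :=
        Finset.card_le_card hsub
    _ ≤ ∑ v : Fin t, (H.edgeFinset.filter (fun e => Sum.inl v ∈ Sym2.map f e)).card :=
        Finset.card_biUnion_le
    _ ≤ ∑ _v : Fin t, 2 := Finset.sum_le_sum fun v _ => fiber_bound H f hdeg _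
    _ = 2 * t := by simp [mul_comm]

/-- for odd `k ≥ 3` and `t = (k-1)/2`, the join of a clique on `t` vertices
with an independent set of any size `m` contains no cycle `C_k` and no linear forest with
`k` edges. -/
theorem stmt_11 (k t m : ℕ) (hk : 3 ≤ k) (hodd : Odd k) (ht : t = (k - 1) / 2) :
    ¬ Contains (cliqueIndepJoin t m) (SimpleGraph.cycleGraph k) ∧
    ¬ ∃ s : Set (Sym2 (Fin t ⊕ Fin m)), s ⊆ (cliqueIndepJoin t m).edgeSet ∧
        s.ncard = k ∧ IsLinearForest (SimpleGraph.fromEdgeSet s) := by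
  classical
  obtain ⟨r, hr⟩ := hodd
  have ht' : 2 * t = k - 1 := by omega
  constructor
  · rintro ⟨f, hf⟩
    obtain ⟨n, rfl⟩ : ∃ n, k = n + 3 := ⟨k - 3, by omega⟩
    have hdeg : ∀ a : Fin (n + 3), (cycleGraph (n + 3)).degree a ≤ 2 := by
      intro a; rw [cycleGraph_degree_three_le]
    have hbound := main_bound (cycleGraph (n + 3)) f hf hdeg
    have hcard : (cycleGraph (n + 3)).edgeSet.ncard = n + 3 := by
      rw [← coe_edgeFinset, Set.ncard_coe_finset]
      have hs := (cycleGraph (n + 3)).sum_degrees_eq_twice_card_edges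
      have : ∑ v : Fin (n + 3), (cycleGraph (n + 3)).degree v = 2 * (n + 3) := by
        rw [Finset.sum_congr rfl fun v _ => cycleGraph_degree_three_le]
        simp [mul_comm]
      omega
    omega
  · rintro ⟨s, hsub, hcard, _, hdeg⟩
    set H := SimpleGraph.fromEdgeSet s with hH
    have hedge : H.edgeSet = s := by
      rw [hH, edgeSet_fromEdgeSet]
      ext e
      constructor
      · rintro ⟨hes, _⟩; exact hes
      · intro hes
        exact ⟨hes, (cliqueIndepJoin t m).not_isDiag_of_mem_edgeSet (hsub hes)⟩
    have hf : ∀ a b, H.Adj a b → (cliqueIndepJoin t m).Adj a b := by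
      intro a b hab
      rw [← mem_edgeSet, ← Set.mem_toFinset] at hab ⊢
      rw [Set.mem_toFinset] at hab ⊢
      rw [hedge] at hab
      exact hsub hab
    have hdeg' : ∀ a, H.degree a ≤ 2 := by
      intro a
      have := hdeg a
      rwa [Set.ncard_eq_toFinset_card'] at this
    have hbound := main_bound H (Function.Embedding.refl _) hf hdeg'
    rw [hedge, hcard] at hbound
    omega
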